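/- Φ : P* → (ℤ/N)ˣ is a bijection; in particular the set P* has the same cardinality as the unit group (ℤ/N)ˣ, namely |P*| = (p−1)(q−1). -/

import Mathlib

/-- `Φ : P* → (ℤ/N)ˣ`, `Φ(x,y) = (1+x)·y⁻¹`, is a bijection from
`P* = {(x,y) ∈ ℤ/N × (ℤ/N)ˣ : x² − Dy² = 1}` onto the units of `ℤ/N`; in
particular `|P*| = (p−1)(q−1)`. -/
theorem phi_bijective (p q : ℕ) (hp : p.Prime) (hq : q.Prime)
    (hpodd : Odd p) (hqodd : Odd q) (hpq : p ≠ q)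
    (D : ZMod (p * q))
    (hDp : ¬ ∃ t : ZMod p, t ^ 2 = ZMod.castHom (dvd_mul_right p q) (ZMod p) D)
    (hDq : ¬ ∃ t : ZMod q, t ^ 2 = ZMod.castHom (dvd_mul_left q p) (ZMod q) D)
    (hDp' : ¬ ∃ t : ZMod p, t ^ 2 = ZMod.castHom (dvd_mul_right p q) (ZMod p) (-D))
    (hDq' : ¬ ∃ t : ZMod q, t ^ 2 = ZMod.castHom (dvd_mul_left q p) (ZMod q) (-D)) :
    Set.BijOn (fun P : ZMod (p * q) × ZMod (p * q) => (1 + P.1) * P.2⁻¹)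
      {P : ZMod (p * q) × ZMod (p * q) | IsUnit P.2 ∧ P.1 ^ 2 - D * P.2 ^ 2 = 1}
      {u : ZMod (p * q) | IsUnit u} ∧
    Set.ncard
      {P : ZMod (p * q) × ZMod (p * q) | IsUnit P.2 ∧ P.1 ^ 2 - D * P.2 ^ 2 = 1}
      = (p - 1) * (q - 1) := by
  have hcop : Nat.Coprime p q := (Nat.coprime_primes hp hq).mpr hpq
  haveI : Fact p.Prime := ⟨hp⟩
  haveI : Fact q.Prime := ⟨hq⟩
  haveI : NeZero (p * q) := ⟨mul_ne_zero hp.pos.ne' hq.pos.ne'⟩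
  set cp := ZMod.castHom (dvd_mul_right p q) (ZMod p) with hcp
  set cq := ZMod.castHom (dvd_mul_left q p) (ZMod q) with hcq
  set e := ZMod.chineseRemainder hcop with he
  have hfstp : (RingHom.fst (ZMod p) (ZMod q)).comp (e : ZMod (p*q) →+* ZMod p × ZMod q) = cp :=
    RingHom.ext_zmod _ _
  have hfstq : (RingHom.snd (ZMod p) (ZMod q)).comp (e : ZMod (p*q) →+* ZMod p × ZMod q) = cq :=
    RingHom.ext_zmod _ _
  have hea : ∀ a : ZMod (p*q), e a = (cp a, cq a) := fun a =>
    Prod.ext (RingHom.congr_fun hfstp a) (RingHom.congr_fun hfstq a)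
  -- a is a unit if its reductions mod p and q are nonzero
  have unit_of : ∀ a : ZMod (p*q), cp a ≠ 0 → cq a ≠ 0 → IsUnit a := by
    intro a h1 h2
    refine IsUnit.of_mul_eq_one (a := a) (e.symm ((cp a)⁻¹, (cq a)⁻¹)) ?_
    apply e.injective
    rw [map_mul, map_one, e.apply_symm_apply, hea a]
    exact Prod.ext (mul_inv_cancel₀ h1) (mul_inv_cancel₀ h2)
  have hD : IsUnit D := by
    refine unit_of D (fun h0 => hDp ⟨0, ?_⟩) (fun h0 => hDq ⟨0, ?_⟩) <;>
      · rw [h0]; ring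
  have hsub : ∀ m : ZMod (p*q), IsUnit (m ^ 2 - D) := by
    intro m
    refine unit_of _ (fun h0 => hDp ⟨cp m, ?_⟩) (fun h0 => hDq ⟨cq m, ?_⟩)
    · have h1 : cp m ^ 2 - cp D = 0 := by rw [← map_pow, ← map_sub]; exact h0
      exact sub_eq_zero.mp h1
    · have h1 : cq m ^ 2 - cq D = 0 := by rw [← map_pow, ← map_sub]; exact h0
      exact sub_eq_zero.mp h1
  have h2u : IsUnit (2 : ZMod (p*q)) := by
    refine unit_of 2 ?_ ?_
    · have h2 : cp (2 : ZMod (p*q)) = ((2 : ℕ) : ZMod p) := by push_cast; exact map_ofNat cp 2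
      rw [h2, Ne, ZMod.natCast_eq_zero_iff]
      intro hdvd
      have := (Nat.prime_dvd_prime_iff_eq hp Nat.prime_two).mp hdvd
      rw [this] at hpodd
      exact (Nat.not_odd_iff_even.mpr even_two) hpodd
    · have h2 : cq (2 : ZMod (p*q)) = ((2 : ℕ) : ZMod q) := by push_cast; exact map_ofNat cq 2
      rw [h2, Ne, ZMod.natCast_eq_zero_iff]
      intro hdvd
      have := (Nat.prime_dvd_prime_iff_eq hq Nat.prime_two).mp hdvd
      rw [this] at hqodd
      exact (Nat.not_odd_iff_even.mpr even_two) hqodd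
  have hinv : ∀ a : ZMod (p*q), IsUnit a → IsUnit a⁻¹ := fun a ha =>
    IsUnit.of_mul_eq_one (a := a⁻¹) a (ZMod.inv_mul_of_unit a ha)
  -- MapsTo
  have hmaps : ∀ x y : ZMod (p*q), IsUnit y → x ^ 2 - D * y ^ 2 = 1 →
      IsUnit ((1 + x) * y⁻¹) := by
    intro x y hy h
    have hx1 : (1 + x) * (x - 1) = D * y ^ 2 := by linear_combination h
    have hux : IsUnit (1 + x) := isUnit_of_mul_isUnit_left (hx1 ▸ (hD.mul (hy.pow 2)))
    exact hux.mul (hinv y hy)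
  -- key uniqueness : every point of P* is determined by its Φ-value
  have key' : ∀ x y m : ZMod (p*q), IsUnit y → x ^ 2 - D * y ^ 2 = 1 → m * y = 1 + x →
      x = (m ^ 2 + D) * (m ^ 2 - D)⁻¹ ∧ y = 2 * m * (m ^ 2 - D)⁻¹ := by
    intro x y m hy h hmy
    have hs := hsub m
    have hst : (m ^ 2 - D) * (m ^ 2 - D)⁻¹ = 1 := ZMod.mul_inv_of_unit _ hs
    have hzero : y * (y * (m ^ 2 - D) - 2 * m) = 0 := by
      linear_combination (m * y + x - 1) * hmy + h
    have hA : y * (m ^ 2 - D) - 2 * m = 0 := by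
      have h1 : y⁻¹ * (y * (y * (m ^ 2 - D) - 2 * m)) = y⁻¹ * 0 := by rw [hzero]
      rwa [← mul_assoc, ZMod.inv_mul_of_unit y hy, one_mul, mul_zero] at h1
    have hy2 : y * (m ^ 2 - D) = 2 * m := by linear_combination hA
    have hyval : y = 2 * m * (m ^ 2 - D)⁻¹ := by
      calc y = y * ((m ^ 2 - D) * (m ^ 2 - D)⁻¹) := by rw [hst, mul_one]
        _ = y * (m ^ 2 - D) * (m ^ 2 - D)⁻¹ := by ring
        _ = 2 * m * (m ^ 2 - D)⁻¹ := by rw [hy2]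
    refine ⟨?_, hyval⟩
    have hxval : x = m * y - 1 := by linear_combination -hmy
    rw [hxval, hyval]
    linear_combination hst
  have key : ∀ x y : ZMod (p*q), IsUnit y → x ^ 2 - D * y ^ 2 = 1 →
      x = (((1+x)*y⁻¹) ^ 2 + D) * (((1+x)*y⁻¹) ^ 2 - D)⁻¹ ∧
      y = 2 * ((1+x)*y⁻¹) * (((1+x)*y⁻¹) ^ 2 - D)⁻¹ := by
    intro x y hy h
    refine key' x y ((1+x)*y⁻¹) hy h ?_
    rw [mul_assoc, ZMod.inv_mul_of_unit y hy, mul_one]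
  -- inverse map lands in P* with correct Φ-value
  have hback : ∀ m : ZMod (p*q), IsUnit m →
      (IsUnit (2 * m * (m ^ 2 - D)⁻¹) ∧
       ((m ^ 2 + D) * (m ^ 2 - D)⁻¹) ^ 2 - D * (2 * m * (m ^ 2 - D)⁻¹) ^ 2 = 1) ∧
      (1 + (m ^ 2 + D) * (m ^ 2 - D)⁻¹) * (2 * m * (m ^ 2 - D)⁻¹)⁻¹ = m := by
    intro m hm
    have hs := hsub m
    have hst : (m ^ 2 - D) * (m ^ 2 - D)⁻¹ = 1 := ZMod.mul_inv_of_unit _ hs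
    have hyu : IsUnit (2 * m * (m ^ 2 - D)⁻¹) := (h2u.mul hm).mul (hinv _ hs)
    refine ⟨⟨hyu, ?_⟩, ?_⟩
    · linear_combination ((m ^ 2 - D) * (m ^ 2 - D)⁻¹ + 1) * hst
    · have h1x : 1 + (m ^ 2 + D) * (m ^ 2 - D)⁻¹ = m * (2 * m * (m ^ 2 - D)⁻¹) := by
        linear_combination -hst
      rw [h1x, mul_assoc, ZMod.mul_inv_of_unit _ hyu, mul_one]
  have hbij : Set.BijOn (fun P : ZMod (p * q) × ZMod (p * q) => (1 + P.1) * P.2⁻¹)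
      {P : ZMod (p * q) × ZMod (p * q) | IsUnit P.2 ∧ P.1 ^ 2 - D * P.2 ^ 2 = 1}
      {u : ZMod (p * q) | IsUnit u} := by
    refine ⟨?_, ?_, ?_⟩
    · rintro ⟨x, y⟩ ⟨hy, h⟩
      exact hmaps x y hy h
    · rintro ⟨x, y⟩ ⟨hy, h⟩ ⟨x', y'⟩ ⟨hy', h'⟩ hEq
      simp only at hEq
      obtain ⟨hx1, hy1⟩ := key x y hy h
      obtain ⟨hx2, hy2⟩ := key x' y' hy' h'
      rw [hEq] at hx1 hy1
      exact Prod.ext (hx1.trans hx2.symm) (hy1.trans hy2.symm)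
    · rintro m hm
      obtain ⟨⟨hyu, hP⟩, hΦ⟩ := hback m hm
      exact ⟨((m ^ 2 + D) * (m ^ 2 - D)⁻¹, 2 * m * (m ^ 2 - D)⁻¹), ⟨hyu, hP⟩, hΦ⟩
  refine ⟨hbij, ?_⟩
  have himg := hbij.image_eq
  have hcard1 : Set.ncard {P : ZMod (p * q) × ZMod (p * q) |
      IsUnit P.2 ∧ P.1 ^ 2 - D * P.2 ^ 2 = 1} = Set.ncard {u : ZMod (p*q) | IsUnit u} := by
    rw [← himg, Set.ncard_image_of_injOn hbij.injOn]
  rw [hcard1]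
  have hequiv : (ZMod (p*q))ˣ ≃ {u : ZMod (p*q) | IsUnit u} :=
    { toFun := fun u => ⟨u, u.isUnit⟩
      invFun := fun v => v.2.unit
      left_inv := fun u => Units.ext (IsUnit.unit_spec _)
      right_inv := fun v => Subtype.ext v.2.unit_spec }
  have : Set.ncard {u : ZMod (p*q) | IsUnit u} = Nat.card (ZMod (p*q))ˣ := by
    rw [← Nat.card_coe_set_eq, Nat.card_congr hequiv.symm]
  rw [this, Nat.card_eq_fintype_card, ZMod.card_units_eq_totient,
    Nat.totient_mul hcop, Nat.totient_prime hp, Nat.totient_prime hq]
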